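/- Let K be a field of characteristic p > 0 and let W be a Weierstrass curve over K with discriminant Δ(W) ≠ 0, whose j-invariant satisfies j(W) ≠ 0, j(W) ≠ 1728, and j(W) is a p-th power in K (i.e. j(W) = μ^p for some μ ∈ K). Then there exists a Weierstrass curve W′ over K with Δ(W′) ≠ 0 such that W is isomorphic over K to the Frobenius twist W′^{(p)} of W′; that is, there is an admissible change of Weierstrass variables over K carrying the curve obtained from W′ by applying x ↦ x^p to its coefficients onto W. -/

import Mathlib

/-- The `j`-invariant of a Weierstrass curve (meaningful when `Δ ≠ 0`). -/
noncomputable def WeierstrassCurve.jInv {K : Type*} [Field K] (W : WeierstrassCurve K) : K :=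
  W.c₄ ^ 3 / W.Δ

namespace WeierstrassCurve

private lemma jInv_variableChange' {K : Type*} [Field K] (W : WeierstrassCurve K)
    (C : VariableChange K) : (C • W).jInv = W.jInv := by
  rw [jInv, jInv, variableChange_c₄, variableChange_Δ, mul_pow, ← pow_mul]
  have h12 : ((C.u⁻¹ : Kˣ) : K) ^ (4 * 3) = ((C.u⁻¹ : Kˣ) : K) ^ 12 := by norm_num
  rw [h12]
  exact mul_div_mul_left _ _ (pow_ne_zero _ (Units.ne_zero _))

private lemma exists_vc {K : Type*} [Field K] (X W : WeierstrassCurve K)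
    (C₀ D : VariableChange K) (h : C₀ • X = D • W) :
    ∃ C : VariableChange K, C • X = W :=
  ⟨D⁻¹ * C₀, by
    rw [mul_smul, h, ← mul_smul, inv_mul_cancel,
      one_smul]⟩

end WeierstrassCurve

open WeierstrassCurve in
theorem isomorphic_to_frobenius_twist_of_j_pth_power
    (p : ℕ) [Fact p.Prime] (K : Type*) [Field K] [CharP K p]
    (W : WeierstrassCurve K) (hΔ : W.Δ ≠ 0)
    (hj0 : W.jInv ≠ 0) (hj1728 : W.jInv ≠ 1728)
    (hjp : ∃ μ : K, W.jInv = μ ^ p) :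
    ∃ W' : WeierstrassCurve K, W'.Δ ≠ 0 ∧
      ∃ C : WeierstrassCurve.VariableChange K,
        C • (W'.map (frobenius K p)) = W := by
  classical
  obtain ⟨μ, hμ⟩ := hjp
  have hp : p.Prime := Fact.out
  suffices h : ∃ W' : WeierstrassCurve K, ∃ C : WeierstrassCurve.VariableChange K,
      C • (W'.map (frobenius K p)) = W by
    obtain ⟨W', C, hC⟩ := h
    refine ⟨W', fun h0 => hΔ ?_, C, hC⟩
    rw [← hC, variableChange_Δ, map_Δ, h0, map_zero, mul_zero]
  by_cases hp2 : p = 2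
  · subst hp2
    obtain ⟨D, hD⟩ := W.exists_variableChange_isCharTwoNF
    set V := D • W with hV
    have hΔV : V.Δ ≠ 0 := by
      rw [hV, variableChange_Δ]
      exact mul_ne_zero (pow_ne_zero _ (Units.ne_zero _)) hΔ
    have hjV : V.jInv = W.jInv := jInv_variableChange' W D
    cases hD with
    | of_j_eq_zero =>
      exact absurd (by rw [← hjV, jInv, c₄_of_isCharTwoJEqZeroNF_of_char_two]; simp) hj0
    | of_j_ne_zero =>
      have hc₄ : V.c₄ = 1 := c₄_of_isCharTwoJNeZeroNF_of_char_two V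
      have hΔa : V.Δ = V.a₆ := Δ_of_isCharTwoJNeZeroNF_of_char_two V
      have ha₆ : V.a₆ ≠ 0 := hΔa ▸ hΔV
      have hμ0 : μ ≠ 0 := fun h0 => hj0 (by rw [hμ, h0]; simp)
      have hj2 : (1 : K) / V.a₆ = μ ^ 2 := by
        rw [← hμ, ← hjV, jInv, hc₄, hΔa, one_pow]
      have ha₆eq : V.a₆ = μ⁻¹ ^ 2 := by
        field_simp at hj2 ⊢
        linear_combination -hj2
      refine ⟨⟨1, V.a₂, 0, 0, μ⁻¹⟩, exists_vc _ _ ⟨1, 0, V.a₂, 0⟩ D ?_⟩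
      rw [← hV]
      ext <;> simp only [variableChange_a₁, variableChange_a₂, variableChange_a₃,
        variableChange_a₄, variableChange_a₆, map_a₁, map_a₂, map_a₃, map_a₄, map_a₆,
        frobenius_def, a₁_of_isCharTwoJNeZeroNF, a₃_of_isCharTwoJNeZeroNF,
        a₄_of_isCharTwoJNeZeroNF, inv_one, Units.val_one, map_one, map_zero, ha₆eq]
      · linear_combination V.a₂ * CharP.cast_eq_zero K 2
      · linear_combination (-V.a₂) * CharP.cast_eq_zero K 2
      · ring
      · ring
      · ring
  by_cases hp3 : p = 3
  · subst hp3
    obtain ⟨D, hD⟩ := W.exists_variableChange_isCharThreeNF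
    set V := D • W with hV
    have hΔV : V.Δ ≠ 0 := by
      rw [hV, variableChange_Δ]
      exact mul_ne_zero (pow_ne_zero _ (Units.ne_zero _)) hΔ
    have hjV : V.jInv = W.jInv := jInv_variableChange' W D
    cases hD with
    | of_j_eq_zero =>
      exact absurd (by rw [← hjV, jInv, c₄_of_isShortNF_of_char_three]; simp) hj0
    | of_j_ne_zero =>
      have hc₄ : V.c₄ = V.a₂ ^ 2 := c₄_of_isCharThreeJNeZeroNF_of_char_three V
      have hΔa : V.Δ = -V.a₂ ^ 3 * V.a₆ := Δ_of_isCharThreeJNeZeroNF_of_char_three V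
      have ha₂ : V.a₂ ≠ 0 := by
        intro h0
        apply hj0
        rw [← hjV, jInv, hc₄, h0]
        simp
      have ha₆ : V.a₆ ≠ 0 := by
        intro h0
        apply hΔV
        rw [hΔa, h0, mul_zero]
      have hμ0 : μ ≠ 0 := fun h0 => hj0 (by rw [hμ, h0]; simp)
      have hj3 : (V.a₂ ^ 2) ^ 3 / (-V.a₂ ^ 3 * V.a₆) = μ ^ 3 := by
        rw [← hc₄, ← hΔa, ← jInv, hjV, hμ]
      have key3 : μ ^ 3 * V.a₆ = -V.a₂ ^ 3 := by
        apply mul_left_cancel₀ (pow_ne_zero 3 ha₂)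
        field_simp at hj3
        linear_combination (-V.a₂ ^ 3) * hj3
      have ha₆eq : V.a₆ = -V.a₂ ^ 3 / μ ^ 3 := by
        field_simp
        linear_combination key3
      refine ⟨⟨0, V.a₂, 0, 0, -V.a₂ ^ 3 / μ⟩,
        exists_vc _ _ ⟨Units.mk0 V.a₂ ha₂, 0, 0, 0⟩ D ?_⟩
      rw [← hV]
      ext <;> simp only [variableChange_a₁, variableChange_a₂, variableChange_a₃,
        variableChange_a₄, variableChange_a₆, map_a₁, map_a₂, map_a₃, map_a₄, map_a₆,
        frobenius_def, a₁_of_isCharThreeJNeZeroNF, a₃_of_isCharThreeJNeZeroNF,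
        a₄_of_isCharThreeJNeZeroNF, map_zero, Units.val_inv_eq_inv_val, Units.val_mk0,
        ha₆eq]
      · ring
      · field_simp
        ring
      · ring
      · ring
      · field_simp
        ring
  · -- the case p ≥ 5
    have h2 : (2 : K) ≠ 0 := by
      intro h0
      exact hp2 ((Nat.prime_dvd_prime_iff_eq hp Nat.prime_two).mp
        ((CharP.cast_eq_zero_iff K p 2).mp (by exact_mod_cast h0)))
    have h3 : (3 : K) ≠ 0 := by
      intro h0
      exact hp3 ((Nat.prime_dvd_prime_iff_eq hp Nat.prime_three).mp
        ((CharP.cast_eq_zero_iff K p 3).mp (by exact_mod_cast h0)))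
    haveI := invertibleOfNonzero h2
    haveI := invertibleOfNonzero h3
    obtain ⟨D, hD⟩ := W.exists_variableChange_isShortNF
    set V := D • W with hV
    haveI := hD
    have hΔV : V.Δ ≠ 0 := by
      rw [hV, variableChange_Δ]
      exact mul_ne_zero (pow_ne_zero _ (Units.ne_zero _)) hΔ
    have hjV : V.jInv = W.jInv := jInv_variableChange' W D
    have hc₄ : V.c₄ = -48 * V.a₄ := c₄_of_isShortNF V
    have hc₆ : V.c₆ = -864 * V.a₆ := c₆_of_isShortNF V
    have hΔa : V.Δ = -16 * (4 * V.a₄ ^ 3 + 27 * V.a₆ ^ 2) := Δ_of_isShortNF V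
    have h16 : (16 : K) ≠ 0 := by
      have h : (16 : K) = 2 ^ 4 := by norm_num
      rw [h]; exact pow_ne_zero _ h2
    have h4 : (4 : K) ≠ 0 := by
      have h : (4 : K) = 2 ^ 2 := by norm_num
      rw [h]; exact pow_ne_zero _ h2
    have ha₄ : V.a₄ ≠ 0 := by
      intro h0
      apply hj0
      rw [← hjV, jInv, hc₄, h0, mul_zero]
      simp
    have ha₆ : V.a₆ ≠ 0 := by
      intro h0
      apply hj1728
      have hrel := V.c_relation
      rw [hc₆, h0, mul_zero] at hrel
      rw [← hjV, jInv, div_eq_iff hΔV]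
      linear_combination -hrel
    have hμ0 : μ ≠ 0 := fun h0 => hj0 (by rw [hμ, h0, zero_pow hp.ne_zero])
    have h1728 : ((1728 : K)) ^ p = 1728 := by
      have h := map_ofNat (frobenius K p) 1728
      rwa [frobenius_def] at h
    have hj1728' : μ ^ p - 1728 ≠ 0 := sub_ne_zero.mpr (by rw [← hμ]; exact hj1728)
    have hμ1728 : μ - 1728 ≠ 0 := by
      intro h0
      apply hj1728
      rw [hμ, sub_eq_zero.mp h0, h1728]
    obtain ⟨k, hk⟩ := hp.odd_of_ne_two hp2
    have hΔV' : (-16 * (4 * V.a₄ ^ 3 + 27 * V.a₆ ^ 2) : K) ≠ 0 := hΔa ▸ hΔV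
    have hE0 : μ ^ p * (-16 * (4 * V.a₄ ^ 3 + 27 * V.a₆ ^ 2)) = (-48 * V.a₄) ^ 3 := by
      have h : μ ^ p = (-48 * V.a₄) ^ 3 / (-16 * (4 * V.a₄ ^ 3 + 27 * V.a₆ ^ 2)) := by
        rw [← hc₄, ← hΔa, ← jInv, hjV, ← hμ]
      exact (eq_div_iff hΔV').mp h
    have hkey : (-27 * μ / (4 * (μ - 1728))) ^ p = V.a₄ ^ 3 / V.a₆ ^ 2 := by
      have h1 : (-27 * μ / (4 * (μ - 1728))) ^ p
          = frobenius K p (-27 * μ / (4 * (μ - 1728))) := by rw [frobenius_def]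
      rw [h1, map_div₀, map_mul, map_mul, map_sub, map_neg, map_ofNat, map_ofNat, map_ofNat,
        frobenius_def]
      rw [div_eq_div_iff (mul_ne_zero h4 hj1728') (pow_ne_zero 2 ha₆)]
      apply mul_left_cancel₀ h16
      linear_combination hE0
    set d : K := V.a₆ / V.a₄ with hd
    have hd0 : d ≠ 0 := div_ne_zero ha₆ ha₄
    set e : K := d ^ k with he'
    have he : e ≠ 0 := pow_ne_zero _ hd0
    have hpow2 : ((-27 * μ / (4 * (μ - 1728))) * d ^ 2) ^ p
        = V.a₄ ^ 3 / V.a₆ ^ 2 * (e ^ 4 * d ^ 2) := by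
      rw [mul_pow, hkey, ← pow_mul, hk, he',
        show 2 * (2 * k + 1) = k * 4 + 2 by ring, pow_add, pow_mul]
    have hpow3 : ((-27 * μ / (4 * (μ - 1728))) * d ^ 3) ^ p
        = V.a₄ ^ 3 / V.a₆ ^ 2 * (e ^ 6 * d ^ 3) := by
      rw [mul_pow, hkey, ← pow_mul, hk, he',
        show 3 * (2 * k + 1) = k * 6 + 3 by ring, pow_add, pow_mul]
    refine ⟨⟨0, 0, 0, (-27 * μ / (4 * (μ - 1728))) * d ^ 2,
      (-27 * μ / (4 * (μ - 1728))) * d ^ 3⟩,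
      exists_vc _ _ ⟨Units.mk0 e he, 0, 0, 0⟩ D ?_⟩
    rw [← hV]
    ext <;> simp only [variableChange_a₁, variableChange_a₂, variableChange_a₃,
      variableChange_a₄, variableChange_a₆, map_a₁, map_a₂, map_a₃, map_a₄, map_a₆,
      frobenius_def, a₁_of_isShortNF, a₂_of_isShortNF, a₃_of_isShortNF,
      map_zero, Units.val_inv_eq_inv_val, Units.val_mk0, hpow2, hpow3]
    · ring
    · ring
    · ring
    · rw [hd]
      field_simp
      ring
    · rw [hd]
      field_simp
      ring
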